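/- Let R be a ring, let N and M be ℤ-indexed chain complexes of R-modules, let (f, g, φ) be a contraction from N to M, and let δ be a perturbation of N that is pointwise nilpotent with respect to φ. Define Σx = Σ_{i≥0} (−1)^i (φδ)^i x, ∂_δ = f ∘ δ ∘ Σ ∘ g, f_δ = f ∘ (id − δ ∘ Σ ∘ φ), and g_δ = Σ ∘ g. Then f_δ and g_δ are chain maps with respect to the perturbed differentials: (∂_M + ∂_δ) ∘ f_δ = f_δ ∘ (∂_N + δ) and (∂_N + δ) ∘ g_δ = g_δ ∘ (∂_M + ∂_δ). -/
import Mathlib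


/-- A contraction between ℤ-graded chain complexes of `R`-modules, presented via total
modules `N` and `M` with internal ℤ-gradings `𝒩`, `ℳ`, differentials `dN`, `dM` of
degree `-1` squaring to zero, chain maps `f : N → M`, `g : M → N` of degree `0`, and a
homotopy operator `φ : N → N` of degree `+1`, satisfying
`f ∘ g = id`, `g ∘ f + φ ∘ dN + dN ∘ φ = id`, `f ∘ φ = 0`, `φ ∘ g = 0`, `φ ∘ φ = 0`. -/
structure Contraction (R : Type) [Ring R]
    (N : Type) [AddCommGroup N] [Module R N]
    (M : Type) [AddCommGroup M] [Module R M]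
    (𝒩 : ℤ → Submodule R N) (ℳ : ℤ → Submodule R M)
    (dN : N →ₗ[R] N) (dM : M →ₗ[R] M)
    (f : N →ₗ[R] M) (g : M →ₗ[R] N) (φ : N →ₗ[R] N) : Prop where
  gradedN : DirectSum.IsInternal 𝒩
  gradedM : DirectSum.IsInternal ℳ
  dN_deg : ∀ i : ℤ, ∀ x ∈ 𝒩 i, dN x ∈ 𝒩 (i - 1)
  dM_deg : ∀ i : ℤ, ∀ x ∈ ℳ i, dM x ∈ ℳ (i - 1)
  dN_sq : dN ∘ₗ dN = 0
  dM_sq : dM ∘ₗ dM = 0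
  f_deg : ∀ i : ℤ, ∀ x ∈ 𝒩 i, f x ∈ ℳ i
  g_deg : ∀ i : ℤ, ∀ x ∈ ℳ i, g x ∈ 𝒩 i
  φ_deg : ∀ i : ℤ, ∀ x ∈ 𝒩 i, φ x ∈ 𝒩 (i + 1)
  f_chain : dM ∘ₗ f = f ∘ₗ dN
  g_chain : dN ∘ₗ g = g ∘ₗ dM
  fg : f ∘ₗ g = LinearMap.id
  homotopy : g ∘ₗ f + φ ∘ₗ dN + dN ∘ₗ φ = LinearMap.id
  fφ : f ∘ₗ φ = 0
  φg : φ ∘ₗ g = 0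
  φφ : φ ∘ₗ φ = 0

/-- Telescoping: if `P^m x = 0` then `Σ_{i<m} (-1)^i P^i x` is a pointwise inverse of
`1 + P` at `x`. -/
lemma tele_sum {R : Type} [Ring R] {N : Type} [AddCommGroup N] [Module R N]
    (P : N →ₗ[R] N) (x : N) (m : ℕ) (hm : (P ^ m) x = 0) :
    (∑ i ∈ Finset.range m, ((-1 : ℤ) ^ i) • ((P ^ i) x))
      + P (∑ i ∈ Finset.range m, ((-1 : ℤ) ^ i) • ((P ^ i) x)) = x := by
  have h1 : P (∑ i ∈ Finset.range m, ((-1 : ℤ) ^ i) • ((P ^ i) x))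
      = ∑ i ∈ Finset.range m, ((-1 : ℤ) ^ i) • ((P ^ (i + 1)) x) := by
    rw [map_sum]
    refine Finset.sum_congr rfl fun i _ => ?_
    rw [map_zsmul]
    congr 1
    rw [pow_succ']
    rfl
  rw [h1, ← Finset.sum_add_distrib]
  have h2 : ∑ i ∈ Finset.range m,
      (((-1 : ℤ) ^ i) • ((P ^ i) x) + ((-1 : ℤ) ^ i) • ((P ^ (i + 1)) x))
      = ∑ i ∈ Finset.range m,
        ((fun j => ((-1 : ℤ) ^ j) • ((P ^ j) x)) i
          - (fun j => ((-1 : ℤ) ^ j) • ((P ^ j) x)) (i + 1)) := by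
    refine Finset.sum_congr rfl fun i _ => ?_
    simp only [pow_succ, mul_comm, mul_smul, neg_smul, one_smul, neg_one_smul,
      sub_neg_eq_add]
  rw [h2, Finset.sum_range_sub' (fun j => ((-1 : ℤ) ^ j) • ((P ^ j) x)) m]
  simp [hm]

/-- The perturbed maps `f_δ = f ∘ (id - δ ∘ S ∘ φ)` and `g_δ = S ∘ g` are chain maps
with respect to the perturbed differentials `dN + δ` and `dM + f ∘ δ ∘ S ∘ g`. -/
theorem perturbed_maps_are_chain_maps
    (R : Type) [Ring R]
    (N : Type) [AddCommGroup N] [Module R N]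
    (M : Type) [AddCommGroup M] [Module R M]
    (𝒩 : ℤ → Submodule R N) (ℳ : ℤ → Submodule R M)
    (dN : N →ₗ[R] N) (dM : M →ₗ[R] M)
    (f : N →ₗ[R] M) (g : M →ₗ[R] N) (φ : N →ₗ[R] N)
    (hc : Contraction R N M 𝒩 ℳ dN dM f g φ)
    (δ : N →ₗ[R] N)
    (δ_deg : ∀ i : ℤ, ∀ x ∈ 𝒩 i, δ x ∈ 𝒩 (i - 1))
    (δ_pert : (dN + δ) ∘ₗ (dN + δ) = 0)
    (δ_nil : ∀ x : N, ∃ m : ℕ, ((φ ∘ₗ δ) ^ m) x = 0)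
    (S : N →ₗ[R] N)
    (hS : ∀ (x : N) (m : ℕ), ((φ ∘ₗ δ) ^ m) x = 0 →
      S x = ∑ i ∈ Finset.range m, ((-1 : ℤ) ^ i) • (((φ ∘ₗ δ) ^ i) x)) :
    ((dM + f ∘ₗ δ ∘ₗ S ∘ₗ g) ∘ₗ (f ∘ₗ (LinearMap.id - δ ∘ₗ S ∘ₗ φ))
        = (f ∘ₗ (LinearMap.id - δ ∘ₗ S ∘ₗ φ)) ∘ₗ (dN + δ)) ∧
    ((dN + δ) ∘ₗ (S ∘ₗ g) = (S ∘ₗ g) ∘ₗ (dM + f ∘ₗ δ ∘ₗ S ∘ₗ g)) := by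
  -- pointwise fundamental identity  S x + (φδ)(S x) = x
  have hts : ∀ x : N, S x + (φ ∘ₗ δ) (S x) = x := by
    intro x
    obtain ⟨m, hm⟩ := δ_nil x
    rw [hS x m hm]
    exact tele_sum _ x m hm
  -- e1 : φδS = 1 - S
  have e1 : φ * δ * S = 1 - S := by
    ext x
    have := hts x
    simp only [Module.End.mul_apply, LinearMap.sub_apply, Module.End.one_apply,
      LinearMap.comp_apply] at *
    rw [eq_sub_iff_add_eq, add_comm]
    exact this
  -- e2 : S(φδ) = 1 - S
  have e2 : S * (φ * δ) = 1 - S := by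
    ext x
    obtain ⟨m, hm⟩ := δ_nil x
    have hPx : ((φ ∘ₗ δ) ^ m) ((φ ∘ₗ δ) x) = 0 := by
      have h1 : ((φ ∘ₗ δ) ^ m) ((φ ∘ₗ δ) x) = ((φ ∘ₗ δ) ^ (m + 1)) x := by
        rw [pow_succ]; rfl
      rw [h1, pow_succ']
      simp [Module.End.mul_apply, hm]
    have comm : S ((φ ∘ₗ δ) x) = (φ ∘ₗ δ) (S x) := by
      rw [hS ((φ ∘ₗ δ) x) m hPx, hS x m hm, map_sum]
      refine Finset.sum_congr rfl fun i _ => ?_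
      rw [map_zsmul]
      congr 1
      show ((φ ∘ₗ δ) ^ i) ((φ ∘ₗ δ) x) = (φ ∘ₗ δ) (((φ ∘ₗ δ) ^ i) x)
      rw [← Module.End.mul_apply, ← pow_succ, pow_succ', Module.End.mul_apply]
    have := hts x
    simp only [Module.End.mul_apply, LinearMap.sub_apply, Module.End.one_apply,
      LinearMap.comp_apply] at *
    rw [comm, eq_sub_iff_add_eq, add_comm]
    exact this
  -- e3 : dNδ + δdN + δδ = 0
  have e3 : dN * δ + δ * dN + δ * δ = 0 := by
    have h1 : (dN + δ) * (dN + δ) = 0 := by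
      rw [Module.End.mul_eq_comp]; exact δ_pert
    have h2 : dN * dN = 0 := by
      rw [Module.End.mul_eq_comp]; exact hc.dN_sq
    have h3 : dN * δ + δ * dN + δ * δ = (dN + δ) * (dN + δ) - dN * dN := by
      noncomm_ring
    rw [h3, h1, h2, sub_zero]
  -- gf = 1 - φ dN - dN φ
  have hgf : g ∘ₗ f = 1 - φ * dN - dN * φ := by
    have h := hc.homotopy
    rw [Module.End.mul_eq_comp, Module.End.mul_eq_comp, Module.End.one_eq_id, ← h]
    abel
  -- End identity for goal 1
  have G1 : (dN + δ * S * (g ∘ₗ f)) * (1 - δ * S * φ) = (1 - δ * S * φ) * (dN + δ) := by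
    rw [hgf]
    have key : (dN + δ * S * (1 - φ * dN - dN * φ)) * (1 - δ * S * φ)
        - (1 - δ * S * φ) * (dN + δ)
        = -((dN * δ + δ * dN + δ * δ) * S * φ)
          + δ * S * φ * (dN * δ + δ * dN + δ * δ) * S * φ
          + δ * S * dN * (φ * δ * S - (1 - S)) * φ
          + δ * (S * (φ * δ) - (1 - S)) * (1 - dN * S * φ - δ * S * φ) := by
      noncomm_ring
    rw [e1, e2, e3] at key
    simp only [zero_mul, mul_zero, neg_zero, sub_self, zero_add, add_zero] at key
    exact sub_eq_zero.mp key
  -- End identity for goal 2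
  have G2 : (dN + δ) * S = S * dN + S * (g ∘ₗ f) * δ * S := by
    rw [hgf]
    have key : (dN + δ) * S - (S * dN + S * (1 - φ * dN - dN * φ) * δ * S)
        = S * φ * (dN * δ + δ * dN + δ * δ) * S
          + S * dN * (φ * δ * S - (1 - S))
          - (S * (φ * δ) - (1 - S)) * (dN * S + δ * S) := by
      noncomm_ring
    rw [e1, e2, e3] at key
    simp only [zero_mul, mul_zero, sub_self, zero_add, add_zero, zero_sub, neg_zero,
      sub_zero] at key
    exact sub_eq_zero.mp key
  -- pointwise chain-map facts
  have hfc : ∀ y : N, dM (f y) = f (dN y) := fun y => by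
    have := DFunLike.congr_fun hc.f_chain y
    simpa using this
  have hgc : ∀ m : M, g (dM m) = dN (g m) := fun m => by
    have := DFunLike.congr_fun hc.g_chain m
    simpa using this.symm
  constructor
  · -- factor both sides through f
    have hL : (dM + f ∘ₗ δ ∘ₗ S ∘ₗ g) ∘ₗ (f ∘ₗ (LinearMap.id - δ ∘ₗ S ∘ₗ φ))
        = f ∘ₗ ((dN + δ * S * (g ∘ₗ f)) * (1 - δ * S * φ)) := by
      ext x
      simp only [LinearMap.comp_apply, LinearMap.add_apply, LinearMap.sub_apply,
        Module.End.mul_apply, Module.End.one_apply, LinearMap.id_coe, id_eq,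
        map_add, map_sub, hfc]
    have hR : (f ∘ₗ (LinearMap.id - δ ∘ₗ S ∘ₗ φ)) ∘ₗ (dN + δ)
        = f ∘ₗ ((1 - δ * S * φ) * (dN + δ)) := by
      ext x
      simp only [LinearMap.comp_apply, LinearMap.add_apply, LinearMap.sub_apply,
        Module.End.mul_apply, Module.End.one_apply, LinearMap.id_coe, id_eq,
        map_add, map_sub]
    rw [hL, hR, G1]
  · -- factor both sides through g
    have hL : (dN + δ) ∘ₗ (S ∘ₗ g) = ((dN + δ) * S) ∘ₗ g := by
      ext x
      simp [LinearMap.comp_apply, Module.End.mul_apply, LinearMap.add_apply]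
    have hR : (S ∘ₗ g) ∘ₗ (dM + f ∘ₗ δ ∘ₗ S ∘ₗ g)
        = (S * dN + S * (g ∘ₗ f) * δ * S) ∘ₗ g := by
      ext x
      simp only [LinearMap.comp_apply, LinearMap.add_apply, Module.End.mul_apply,
        map_add, hgc]
    rw [hL, hR, G2]
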